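/- The triangular pyramid TP_4 has chromatic number 3, and it admits a proper 3-coloring with color classes V_1, V_2, V_3 such that the subgraph induced on V_1 ∪ V_2 is isomorphic to the graph F and V_3 is an independent set. -/

import Mathlib

open SimpleGraph

/-- `G` contains a copy of `H` (a subgraph isomorphic to `H`). -/
def Contains {V W : Type*} (G : SimpleGraph V) (H : SimpleGraph W) : Prop :=
  ∃ f : W → V, Function.Injective f ∧ ∀ ⦃a b : W⦄, H.Adj a b → G.Adj (f a) (f b)

/-- `G` is `H`-free. -/
def Free {V W : Type*} (G : SimpleGraph V) (H : SimpleGraph W) : Prop :=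
  ¬ Contains G H

/-- The number of edges of `G`. -/
noncomputable def eCard {V : Type*} (G : SimpleGraph V) : ℕ := Nat.card G.edgeSet

/-- The Turán number `ex(n, H)`. -/
noncomputable def exNum (n : ℕ) {W : Type*} (H : SimpleGraph W) : ℕ :=
  sSup {m | ∃ G : SimpleGraph (Fin n), _root_.Free G H ∧ m = eCard G}

/-- The graph `F`: a path `x₁ ⋯ x₁₀` together with the chord `x₃x₈`. -/
def FGraph : SimpleGraph (Fin 10) :=
  SimpleGraph.fromRel (fun i j => (i.val + 1 = j.val) ∨ (i.val = 2 ∧ j.val = 7))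

/-- Adjacency for the triangular pyramid: within a layer, or between consecutive layers. -/
def TPAdj (p q : ℕ × ℕ) : Prop :=
  (q.1 = p.1 ∧ q.2 = p.2 + 1) ∨ (q.1 = p.1 + 1 ∧ (q.2 = p.2 ∨ q.2 = p.2 + 1))

/-- The triangular pyramid with `k` layers; vertex `(i, t)` is `yₜⁱ`. -/
def TP (k : ℕ) : SimpleGraph {p : ℕ × ℕ // 1 ≤ p.2 ∧ p.2 ≤ p.1 ∧ p.1 ≤ k + 1} :=
  SimpleGraph.fromRel (fun p q => TPAdj p.1 q.1)

noncomputable def crossCount {V : Type*} (G : SimpleGraph V) (A B : Set V) : ℕ :=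
  Nat.card {p : V × V // p.1 ∈ A ∧ p.2 ∈ B ∧ G.Adj p.1 p.2}


section Aux

instance : ∀ p q : ℕ × ℕ, Decidable (TPAdj p q) := fun p q => by
  unfold TPAdj; infer_instance

instance : DecidableRel (TP 4).Adj := fun p q =>
  decidable_of_iff _ (SimpleGraph.fromRel_adj _ p q).symm

instance : DecidableRel FGraph.Adj := fun p q =>
  decidable_of_iff _ (SimpleGraph.fromRel_adj _ p q).symm

instance {S : Set {p : ℕ × ℕ // 1 ≤ p.2 ∧ p.2 ≤ p.1 ∧ p.1 ≤ 4 + 1}} :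
    DecidableRel ((TP 4).induce S).Adj := fun p q =>
  inferInstanceAs (Decidable ((TP 4).Adj p.1 q.1))

def myC : (TP 4).Coloring (Fin 3) :=
  SimpleGraph.Coloring.mk (fun v => ⟨(v.1.1 + v.1.2) % 3, Nat.mod_lt _ (by norm_num)⟩) (by
    rintro ⟨⟨i, t⟩, hv⟩ ⟨⟨j, s⟩, hw⟩ hadj heq
    rw [TP, SimpleGraph.fromRel_adj] at hadj
    obtain ⟨hne, h⟩ := hadj
    have hval : (i + t) % 3 = (j + s) % 3 := congrArg Fin.val heq
    unfold TPAdj at h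
    simp only [Prod.fst, Prod.snd] at h
    omega)

end Aux

lemma myC_val (v) : (myC v).val = (v.1.1 + v.1.2) % 3 := rfl

def mySet : Set {p : ℕ × ℕ // 1 ≤ p.2 ∧ p.2 ≤ p.1 ∧ p.1 ≤ 4 + 1} :=
  {v | myC v = 0 ∨ myC v = 1}

instance (v) : Decidable (v ∈ mySet) :=
  inferInstanceAs (Decidable (myC v = 0 ∨ myC v = 1))

def myf : Fin 10 → ↥mySet :=
  ![⟨⟨(5,1), by norm_num⟩, by decide⟩,
    ⟨⟨(5,2), by norm_num⟩, by decide⟩,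
    ⟨⟨(4,2), by norm_num⟩, by decide⟩,
    ⟨⟨(3,1), by norm_num⟩, by decide⟩,
    ⟨⟨(2,1), by norm_num⟩, by decide⟩,
    ⟨⟨(2,2), by norm_num⟩, by decide⟩,
    ⟨⟨(3,3), by norm_num⟩, by decide⟩,
    ⟨⟨(4,3), by norm_num⟩, by decide⟩,
    ⟨⟨(5,4), by norm_num⟩, by decide⟩,
    ⟨⟨(5,5), by norm_num⟩, by decide⟩]

lemma mem_mySet_iff (v) : v ∈ mySet ↔ (v.1.1 + v.1.2) % 3 ≠ 2 := by
  have h0 : ((0 : Fin 3)).val = 0 := rfl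
  have h1 : ((1 : Fin 3)).val = 1 := rfl
  constructor
  · rintro (h | h) <;> (have := congrArg Fin.val h; rw [myC_val] at this; omega)
  · intro h
    have hlt : (v.1.1 + v.1.2) % 3 < 3 := Nat.mod_lt _ (by norm_num)
    have : (v.1.1 + v.1.2) % 3 = 0 ∨ (v.1.1 + v.1.2) % 3 = 1 := by omega
    rcases this with h' | h'
    · exact Or.inl (Fin.ext (by rw [myC_val, h0, h']))
    · exact Or.inr (Fin.ext (by rw [myC_val, h1, h']))

lemma mem_mySet_iff' (i t : ℕ) (h) :
    (⟨(i, t), h⟩ : {p : ℕ × ℕ // 1 ≤ p.2 ∧ p.2 ≤ p.1 ∧ p.1 ≤ 4 + 1}) ∈ mySet ↔ (i + t) % 3 ≠ 2 :=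
  mem_mySet_iff _

lemma myf_bij : Function.Bijective myf := by
  constructor
  · decide
  · rintro ⟨⟨⟨i, t⟩, h1, h2, h3⟩, hc⟩
    simp only [Prod.fst, Prod.snd] at h1 h2 h3
    interval_cases i <;> interval_cases t <;>
      first
        | (exfalso; rw [mem_mySet_iff'] at hc; omega)
        | exact ⟨0, rfl⟩ | exact ⟨1, rfl⟩ | exact ⟨2, rfl⟩ | exact ⟨3, rfl⟩
        | exact ⟨4, rfl⟩ | exact ⟨5, rfl⟩ | exact ⟨6, rfl⟩ | exact ⟨7, rfl⟩
        | exact ⟨8, rfl⟩ | exact ⟨9, rfl⟩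

noncomputable def myIso0 : FGraph ≃g ((TP 4).induce mySet) where
  toEquiv := Equiv.ofBijective myf myf_bij
  map_rel_iff' := by
    intro a b
    show ((TP 4).induce mySet).Adj (myf a) (myf b) ↔ FGraph.Adj a b
    revert a b; decide

noncomputable def myIso : ((TP 4).induce mySet) ≃g FGraph := myIso0.symm

lemma fin2_val (h : (2 : Fin 3).val = 2) : True := trivial

/-- `TP₄` has chromatic number `3`, and it has a proper `3`-coloring whose first two
color classes induce a copy of `F` and whose third class is independent. -/
theorem stmt_5 :
    (TP 4).chromaticNumber = 3 ∧
    ∃ C : (TP 4).Coloring (Fin 3),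
      Nonempty (((TP 4).induce {v | C v = 0 ∨ C v = 1}) ≃g FGraph) ∧
      (∀ u v, C u = 2 → C v = 2 → ¬ (TP 4).Adj u v) := by
  constructor
  · apply le_antisymm
    · have h3 : (TP 4).Colorable 3 := ⟨myC⟩
      have := h3.chromaticNumber_le
      exact_mod_cast this
    · by_contra hlt
      push_neg at hlt
      have h2 : (TP 4).chromaticNumber ≤ ((2 : ℕ) : ℕ∞) := by
        have : (TP 4).chromaticNumber < ((2 : ℕ) : ℕ∞) + 1 := by
          exact hlt.trans_eq (by norm_num)
        exact Order.le_of_lt_add_one this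
      obtain ⟨C2⟩ := SimpleGraph.chromaticNumber_le_iff_colorable.mp h2
      have hab : (TP 4).Adj ⟨(1,1), by norm_num⟩ ⟨(2,1), by norm_num⟩ := by decide
      have hac : (TP 4).Adj ⟨(1,1), by norm_num⟩ ⟨(2,2), by norm_num⟩ := by decide
      have hbc : (TP 4).Adj ⟨(2,1), by norm_num⟩ ⟨(2,2), by norm_num⟩ := by decide
      have e1 := Fin.val_ne_of_ne (C2.valid hab)
      have e2 := Fin.val_ne_of_ne (C2.valid hac)
      have e3 := Fin.val_ne_of_ne (C2.valid hbc)
      have l1 := (C2 ⟨(1,1), by norm_num⟩).isLt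
      have l2 := (C2 ⟨(2,1), by norm_num⟩).isLt
      have l3 := (C2 ⟨(2,2), by norm_num⟩).isLt
      omega
  · refine ⟨myC, ⟨myIso⟩, ?_⟩
    rintro ⟨⟨i, t⟩, hu⟩ ⟨⟨j, s⟩, hv⟩ h1 h2 hadj
    rw [TP, SimpleGraph.fromRel_adj] at hadj
    obtain ⟨hne, h⟩ := hadj
    have v1 : (i + t) % 3 = 2 := by
      have := congrArg Fin.val h1; rw [myC_val] at this; exact this
    have v2 : (j + s) % 3 = 2 := by
      have := congrArg Fin.val h2; rw [myC_val] at this; exact this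
    unfold TPAdj at h
    simp only [Prod.fst, Prod.snd] at h
    omega
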